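/- arXiv:math/0607203 — 2 statements merged into one kernel-verified Lean document; each statement's English description precedes it below -/
import Mathlib

section
/- With the setting of the previous statement, if z₁(y) = Φ₁(y) • c for the fundamental matrix Φ₁ on [a,b] with Φ₁(a) = 1, and Φ₂ is the fundamental matrix on [b,c] with Φ₂(b) = 1, then z₂(y) = Φ₂(y) • (B⁻¹ • D • Φ₁(b)) • c for all y ∈ [b,c]. In particular the coefficient vector c^{(2)} on the second interval depends linearly on c, i.e., c^{(2)} = U • c with transfer matrix U = B⁻¹ • D • Φ₁(b). -/
attribute [local instance] Matrix.normedAddCommGroup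

open Matrix

/-- Transfer of coefficients across a conjugation point: if z₁ = Φ₁ c on [a,b]
and B z₂(b) = D z₁(b), then z₂ = Φ₂ (B⁻¹ D Φ₁(b)) c on [b,c]; the transfer
matrix is U = B⁻¹ D Φ₁(b). -/
theorem stmt_9 {N : ℕ} (a b c : ℝ) (hab : a ≤ b) (hbc : b ≤ c)
    (A₁ A₂ : ℝ → Matrix (Fin N) (Fin N) ℝ)
    (hA₁ : ContinuousOn A₁ (Set.Icc a b))
    (hA₂ : ContinuousOn A₂ (Set.Icc b c))
    (Φ₁ Φ₂ : ℝ → Matrix (Fin N) (Fin N) ℝ)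
    (hΦ₁ : ∀ y ∈ Set.Icc a b, ∀ k j,
      HasDerivWithinAt (fun y' => Φ₁ y' k j) ((A₁ y * Φ₁ y) k j) (Set.Icc a b) y)
    (hΦ₁a : Φ₁ a = 1)
    (hΦ₂ : ∀ y ∈ Set.Icc b c, ∀ k j,
      HasDerivWithinAt (fun y' => Φ₂ y' k j) ((A₂ y * Φ₂ y) k j) (Set.Icc b c) y)
    (hΦ₂b : Φ₂ b = 1)
    (B D : Matrix (Fin N) (Fin N) ℝ) (hB : IsUnit B)
    (cvec : Fin N → ℝ)
    (z₁ z₂ : ℝ → Fin N → ℝ)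
    (hz₁ : ∀ y ∈ Set.Icc a b, z₁ y = Φ₁ y *ᵥ cvec)
    (hz₂ : ∀ y ∈ Set.Icc b c, HasDerivWithinAt z₂ (A₂ y *ᵥ z₂ y) (Set.Icc b c) y)
    (hconj : B *ᵥ z₂ b = D *ᵥ z₁ b) :
    ∀ y ∈ Set.Icc b c, z₂ y = Φ₂ y *ᵥ ((B⁻¹ * D * Φ₁ b) *ᵥ cvec) := by
  set w : Fin N → ℝ := (B⁻¹ * D * Φ₁ b) *ᵥ cvec with hw
  set g : ℝ → Fin N → ℝ := fun y => Φ₂ y *ᵥ w with hg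
  -- initial condition
  have hBdet : IsUnit B.det := (Matrix.isUnit_iff_isUnit_det B).1 hB
  have hz₂b : z₂ b = w := by
    have h1 : z₁ b = Φ₁ b *ᵥ cvec := hz₁ b ⟨hab, le_refl b⟩
    have : B⁻¹ *ᵥ (B *ᵥ z₂ b) = B⁻¹ *ᵥ (D *ᵥ z₁ b) := by rw [hconj]
    rw [Matrix.mulVec_mulVec, Matrix.nonsing_inv_mul B hBdet, Matrix.one_mulVec, h1] at this
    rw [this, hw, Matrix.mulVec_mulVec, Matrix.mulVec_mulVec, Matrix.mul_assoc]
  -- the vector field, extended outside [b,c]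
  set P : ℝ → ℝ := fun t => max b (min c t) with hP
  have hPmem : ∀ t, P t ∈ Set.Icc b c := fun t =>
    ⟨le_max_left _ _, max_le hbc (min_le_left _ _)⟩
  have hPid : ∀ t ∈ Set.Icc b c, P t = t := by
    intro t ht
    simp [hP, min_eq_right ht.2, max_eq_right ht.1]
  set v : ℝ → (Fin N → ℝ) → (Fin N → ℝ) := fun t x => A₂ (P t) *ᵥ x with hv
  -- a uniform bound on the entries of A₂
  obtain ⟨C, hC⟩ := (isCompact_Icc : IsCompact (Set.Icc b c)).exists_bound_of_continuousOn hA₂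
  have hC0 : 0 ≤ C := le_trans (norm_nonneg _) (hC b ⟨le_refl b, hbc⟩)
  have hKnn : (0:ℝ) ≤ N * C := mul_nonneg (Nat.cast_nonneg N) hC0
  set K : NNReal := ⟨N * C, hKnn⟩ with hK
  have hlip : ∀ t, LipschitzWith K (v t) := by
    intro t
    intro x y
    rw [edist_dist, edist_dist, dist_eq_norm, dist_eq_norm]
    have hbound : ‖v t x - v t y‖ ≤ (N * C) * ‖x - y‖ := by
      have : v t x - v t y = A₂ (P t) *ᵥ (x - y) := by
        simp [hv, Matrix.mulVec_sub]
      rw [this]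
      apply pi_norm_le_iff_of_nonneg (mul_nonneg hKnn (norm_nonneg _)) |>.2
      intro k
      have : (A₂ (P t) *ᵥ (x - y)) k = ∑ j, A₂ (P t) k j * (x - y) j := rfl
      rw [this]
      calc ‖∑ j, A₂ (P t) k j * (x - y) j‖
          ≤ ∑ j, ‖A₂ (P t) k j * (x - y) j‖ := norm_sum_le _ _
        _ ≤ ∑ _j : Fin N, C * ‖x - y‖ := by
            apply Finset.sum_le_sum
            intro j _
            rw [norm_mul]
            have h1 : ‖A₂ (P t) k j‖ ≤ C :=
              le_trans (Matrix.norm_entry_le_entrywise_sup_norm _) (hC _ (hPmem t))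
            have h2 : ‖(x - y) j‖ ≤ ‖x - y‖ := norm_le_pi_norm _ j
            exact mul_le_mul h1 h2 (norm_nonneg _) hC0
        _ = (N * C) * ‖x - y‖ := by
            rw [Finset.sum_const, Finset.card_univ, Fintype.card_fin]
            push_cast; ring
    calc ENNReal.ofReal ‖v t x - v t y‖ ≤ ENNReal.ofReal ((N * C) * ‖x - y‖) :=
          ENNReal.ofReal_le_ofReal hbound
      _ = (K : ENNReal) * ENNReal.ofReal ‖x - y‖ := by
          rw [ENNReal.ofReal_mul hKnn]
          congr 1
          simp [hK, ENNReal.ofReal, Real.toNNReal, hKnn]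
          rfl
  -- derivative of g
  have hg' : ∀ t ∈ Set.Icc b c, HasDerivWithinAt g (A₂ t *ᵥ g t) (Set.Icc b c) t := by
    intro t ht
    rw [hasDerivWithinAt_pi]
    intro k
    have : (fun y => g y k) = fun y => ∑ j, Φ₂ y k j * w j := by
      funext y; rfl
    rw [this]
    have hsum : HasDerivWithinAt (fun y => ∑ j, Φ₂ y k j * w j)
        (∑ j, (A₂ t * Φ₂ t) k j * w j) (Set.Icc b c) t := by
      apply HasDerivWithinAt.fun_sum
      intro j _
      exact (hΦ₂ t ht k j).mul_const (w j)
    refine hsum.congr_deriv ?_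
    symm
    show (A₂ t *ᵥ g t) k = _
    simp only [hg, Matrix.mulVec_mulVec]
    rfl
  -- continuity of both
  have hz₂c : ContinuousOn z₂ (Set.Icc b c) := fun t ht =>
    (hz₂ t ht).continuousWithinAt
  have hgc : ContinuousOn g (Set.Icc b c) := fun t ht =>
    (hg' t ht).continuousWithinAt
  -- derivatives within Ici t
  have hmem : ∀ t ∈ Set.Ico b c, Set.Icc b c ∈ nhdsWithin t (Set.Ici t) := by
    intro t ht
    have : Set.Icc t c ⊆ Set.Icc b c := Set.Icc_subset_Icc ht.1 le_rfl
    have h2 : Set.Icc t c ∈ nhdsWithin t (Set.Ici t) := by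
      rw [← Set.Ici_inter_Iic]
      exact Filter.inter_mem self_mem_nhdsWithin (nhdsWithin_le_nhds (Iic_mem_nhds ht.2))
    exact Filter.mem_of_superset h2 this
  have hz₂' : ∀ t ∈ Set.Ico b c, HasDerivWithinAt z₂ (v t (z₂ t)) (Set.Ici t) t := by
    intro t ht
    have := (hz₂ t ⟨ht.1, ht.2.le⟩).mono_of_mem_nhdsWithin (hmem t ht)
    simpa [hv, hPid t ⟨ht.1, ht.2.le⟩] using this
  have hgd : ∀ t ∈ Set.Ico b c, HasDerivWithinAt g (v t (g t)) (Set.Ici t) t := by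
    intro t ht
    have := (hg' t ⟨ht.1, ht.2.le⟩).mono_of_mem_nhdsWithin (hmem t ht)
    simpa [hv, hPid t ⟨ht.1, ht.2.le⟩] using this
  have heq : Set.EqOn z₂ g (Set.Icc b c) :=
    ODE_solution_unique_of_mem_Icc_right (s := fun _ => Set.univ)
      (fun t _ => (hlip t).lipschitzOnWith)
      hz₂c hz₂' (fun _ _ => trivial) hgc hgd (fun _ _ => trivial)
      (by rw [hz₂b, hg]; simp [hΦ₂b])
  intro y hy
  exact heq hy
end

section
/- Let n ≥ 1, let a = y₀ < y₁ < ... < y_n = b, let A_i be continuous matrix-valued functions on [y_{i-1}, y_i], and let invertible conjugation matrices B_i (with D_i arbitrary) be given at each interior point y_i, i = 1..n−1. Let Φ_i be the fundamental matrix on [y_{i-1}, y_i] with Φ_i(y_{i-1}) = 1, and define transfer matrices U_1 = 1 and U_{i+1} = B_i⁻¹ D_i Φ_i(y_i) U_i. Then for N = 2m, a nonzero piecewise solution z (solving z' = A_i(y)z on each subinterval and satisfying the conjugation conditions D_i z^{(i)}(y_i) = B_i z^{(i+1)}(y_i)) with z_r(y₀) = 0 for r < m and z_s(y_n) = 0 for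 m ≤ s < N exists if and only if det M = 0, where M is the m × m matrix with entries M_{s,q} = (Φ_n(y_n) • U_n)_{s,q} for m ≤ s, q < N. -/
open Matrix Set

lemma mulVec_hasDeriv {N : ℕ} {A Φv : ℝ → Matrix (Fin N) (Fin N) ℝ} {s : Set ℝ} {t : ℝ}
    (h : ∀ k j, HasDerivWithinAt (fun t' => Φv t' k j) ((A t * Φv t) k j) s t)
    (c : Fin N → ℝ) :
    HasDerivWithinAt (fun t' => Φv t' *ᵥ c) ((A t * Φv t) *ᵥ c) s t := by
  rw [hasDerivWithinAt_pi]
  intro k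
  have h1 : ∀ t', (Φv t' *ᵥ c) k = ∑ j, Φv t' k j * c j := fun t' => rfl
  simp only [h1]
  have h2 : ((A t * Φv t) *ᵥ c) k = ∑ j, (A t * Φv t) k j * c j := rfl
  rw [h2]
  exact HasDerivWithinAt.fun_sum fun j _ => (h k j).mul_const (c j)

lemma ode_unique {N : ℕ} {a b : ℝ} (hab : a ≤ b) {A : ℝ → Matrix (Fin N) (Fin N) ℝ}
    (hA : ContinuousOn A (Set.Icc a b)) {f g : ℝ → Fin N → ℝ}
    (hf : ∀ t ∈ Set.Icc a b, HasDerivWithinAt f (A t *ᵥ f t) (Set.Icc a b) t)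
    (hg : ∀ t ∈ Set.Icc a b, HasDerivWithinAt g (A t *ᵥ g t) (Set.Icc a b) t)
    (hfg : f a = g a) : ∀ t ∈ Set.Icc a b, f t = g t := by
  set L : Matrix (Fin N) (Fin N) ℝ →ₗ[ℝ] ((Fin N → ℝ) →L[ℝ] (Fin N → ℝ)) :=
    (LinearMap.toContinuousLinearMap.toLinearMap).comp Matrix.toLin'.toLinearMap with hL
  have hLapp : ∀ M : Matrix (Fin N) (Fin N) ℝ, ⇑(L M) = fun x => M *ᵥ x := by
    intro M
    funext x
    simp [hL, Matrix.toLin'_apply]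
  have hLcont : Continuous L := L.continuous_of_finiteDimensional
  have hnorm : ContinuousOn (fun t => ‖L (A t)‖) (Set.Icc a b) :=
    (continuous_norm.comp hLcont).comp_continuousOn hA
  obtain ⟨t₀, ht₀, hmax⟩ := isCompact_Icc.exists_isMaxOn (Set.nonempty_Icc.2 hab) hnorm
  have hpmem : ∀ t : ℝ, max a (min t b) ∈ Set.Icc a b := fun t =>
    ⟨le_max_left _ _, max_le hab (min_le_right _ _)⟩
  have hpeq : ∀ t ∈ Set.Icc a b, max a (min t b) = t := by
    intro t ht
    rw [min_eq_left ht.2, max_eq_right ht.1]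
  have hlip : ∀ t : ℝ, LipschitzOnWith (‖L (A t₀)‖.toNNReal)
      (fun x => A (max a (min t b)) *ᵥ x) Set.univ := by
    intro t
    rw [← hLapp]
    refine ((L _).lipschitz.weaken ?_).lipschitzOnWith
    have h3 := hmax (hpmem t)
    simpa [← NNReal.coe_le_coe] using Real.toNNReal_mono h3
  have hderiv : ∀ h : ℝ → Fin N → ℝ,
      (∀ t ∈ Set.Icc a b, HasDerivWithinAt h (A t *ᵥ h t) (Set.Icc a b) t) →
      ∀ t' ∈ Set.Ico a b,
        HasDerivWithinAt h (A (max a (min t' b)) *ᵥ h t') (Set.Ici t') t' := by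
    intro h hh t' ht'
    rw [hpeq t' (Set.Ico_subset_Icc_self ht')]
    exact (hh t' (Set.Ico_subset_Icc_self ht')).mono_of_mem_nhdsWithin
      (Icc_mem_nhdsGE_of_mem ht')
  exact fun t ht => ODE_solution_unique_of_mem_Icc_right
    (v := fun t x => A (max a (min t b)) *ᵥ x) (s := fun _ => Set.univ) (fun t _ => hlip t)
    (fun t' ht' => (hf t' ht').continuousWithinAt)
    (hderiv f hf) (fun _ _ => trivial)
    (fun t' ht' => (hg t' ht').continuousWithinAt)
    (hderiv g hg) (fun _ _ => trivial) hfg ht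

lemma sum_split {m : ℕ} (f : Fin (2*m) → ℝ) (hf : ∀ j : Fin (2*m), (j : ℕ) < m → f j = 0) :
    ∑ j, f j = ∑ q : Fin m, f ⟨m + q, by have := q.isLt; omega⟩ := by
  rw [← Fintype.sum_equiv ((finSumFinEquiv (m := m) (n := m)).trans (finCongr (two_mul m).symm))
    _ f (fun _ => rfl), Fintype.sum_sum_type]
  have h1 : ∀ a : Fin m, f (((finSumFinEquiv (m := m) (n := m)).trans
      (finCongr (two_mul m).symm)) (Sum.inl a)) = 0 := by
    intro a
    refine hf _ ?_
    simp
  have h2 : ∀ q : Fin m, f (((finSumFinEquiv (m := m) (n := m)).trans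
      (finCongr (two_mul m).symm)) (Sum.inr q)) = f ⟨m + q, by have := q.isLt; omega⟩ := by
    intro q
    exact congrArg f (by apply Fin.ext; simp; omega)
  rw [Finset.sum_congr rfl (fun a _ => h1 a), Finset.sum_congr rfl (fun q _ => h2 q)]
  simp


/-- Multi-interval boundary problem with conjugation conditions: a nontrivial
piecewise solution with z_r(y₀)=0 (r<m), z_s(y_n)=0 (m≤s<2m) exists iff the
determinant of the lower-right m×m block of Φ_n(y_n) U_n vanishes, where the
transfer matrices satisfy U_1 = 1, U_{i+1} = B_i⁻¹ D_i Φ_i(y_i) U_i. -/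
theorem stmt_10 {m : ℕ} (n : ℕ) (hn : 1 ≤ n) (y : ℕ → ℝ)
    (hy : ∀ i < n, y i < y (i+1))
    (A : ℕ → ℝ → Matrix (Fin (2*m)) (Fin (2*m)) ℝ)
    (hA : ∀ i, 1 ≤ i → i ≤ n → ContinuousOn (A i) (Set.Icc (y (i-1)) (y i)))
    (B D : ℕ → Matrix (Fin (2*m)) (Fin (2*m)) ℝ)
    (hB : ∀ i, 1 ≤ i → i ≤ n - 1 → IsUnit (B i))
    (Φ : ℕ → ℝ → Matrix (Fin (2*m)) (Fin (2*m)) ℝ)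
    (hΦ : ∀ i, 1 ≤ i → i ≤ n → ∀ t ∈ Set.Icc (y (i-1)) (y i), ∀ k j,
      HasDerivWithinAt (fun t' => Φ i t' k j) ((A i t * Φ i t) k j)
        (Set.Icc (y (i-1)) (y i)) t)
    (hΦinit : ∀ i, 1 ≤ i → i ≤ n → Φ i (y (i-1)) = 1)
    (U : ℕ → Matrix (Fin (2*m)) (Fin (2*m)) ℝ)
    (hU1 : U 1 = 1)
    (hUrec : ∀ i, 1 ≤ i → i ≤ n - 1 → U (i+1) = (B i)⁻¹ * D i * Φ i (y i) * U i) :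
    (∃ z : ℕ → ℝ → Fin (2*m) → ℝ,
      (∀ i, 1 ≤ i → i ≤ n → ∀ t ∈ Set.Icc (y (i-1)) (y i),
        HasDerivWithinAt (z i) (A i t *ᵥ z i t) (Set.Icc (y (i-1)) (y i)) t) ∧
      (∀ i, 1 ≤ i → i ≤ n - 1 → D i *ᵥ z i (y i) = B i *ᵥ z (i+1) (y i)) ∧
      (∀ r : Fin (2*m), (r : ℕ) < m → z 1 (y 0) r = 0) ∧
      (∀ s : Fin (2*m), m ≤ (s : ℕ) → z n (y n) s = 0) ∧
      (∃ i, 1 ≤ i ∧ i ≤ n ∧ ∃ t ∈ Set.Icc (y (i-1)) (y i), z i t ≠ 0))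
    ↔ Matrix.det (Matrix.of fun s q : Fin m =>
        (Φ n (y n) * U n) ⟨m + s, by have := s.isLt; omega⟩
          ⟨m + q, by have := q.isLt; omega⟩) = 0 := by
  have hle : ∀ i, 1 ≤ i → i ≤ n → y (i-1) ≤ y i := by
    intro i h1 h2
    have h := hy (i-1) (by omega)
    have he : i - 1 + 1 = i := by omega
    rw [he] at h
    exact h.le
  have fact1 : ∀ (c : Fin (2*m) → ℝ) i, 1 ≤ i → i ≤ n → ∀ t ∈ Set.Icc (y (i-1)) (y i),
      HasDerivWithinAt (fun t' => Φ i t' *ᵥ (U i *ᵥ c))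
        (A i t *ᵥ (Φ i t *ᵥ (U i *ᵥ c))) (Set.Icc (y (i-1)) (y i)) t := by
    intro c i h1 h2 t ht
    have h := mulVec_hasDeriv (fun k j => hΦ i h1 h2 t ht k j) (U i *ᵥ c)
    rwa [Matrix.mulVec_mulVec]
  have fact2 : ∀ (c : Fin (2*m) → ℝ) i, 1 ≤ i → i ≤ n - 1 →
      B i *ᵥ (U (i+1) *ᵥ c) = D i *ᵥ (Φ i (y i) *ᵥ (U i *ᵥ c)) := by
    intro c i h1 h2
    have hdet : IsUnit (B i).det := (Matrix.isUnit_iff_isUnit_det _).mp (hB i h1 h2)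
    rw [hUrec i h1 h2]
    simp only [Matrix.mulVec_mulVec, ← Matrix.mul_assoc]
    rw [Matrix.mul_nonsing_inv _ hdet, Matrix.one_mul]
  constructor
  · rintro ⟨z, hzd, hzc, hzl, hzr, hznt⟩
    set c := z 1 (y 0) with hc
    have claim : ∀ i, 1 ≤ i → i ≤ n → ∀ t ∈ Set.Icc (y (i-1)) (y i),
        z i t = Φ i t *ᵥ (U i *ᵥ c) := by
      intro i
      induction i with
      | zero => omega
      | succ i ih =>
        intro h1 h2
        simp only [Nat.add_sub_cancel]
        by_cases hi : i = 0
        · subst hi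
          have hinit : z 1 (y 0) = Φ 1 (y 0) *ᵥ (U 1 *ᵥ c) := by
            have h0 : Φ 1 (y 0) = 1 := hΦinit 1 le_rfl hn
            rw [h0, hU1, Matrix.one_mulVec, Matrix.one_mulVec]
          exact fun t ht => ode_unique (hle 1 le_rfl hn) (hA 1 le_rfl hn)
            (hzd 1 le_rfl hn) (fact1 c 1 le_rfl hn) hinit t ht
        · have h1' : 1 ≤ i := by omega
          have h2' : i ≤ n - 1 := by omega
          have h2'' : i ≤ n := by omega
          have hdet : IsUnit (B i).det := (Matrix.isUnit_iff_isUnit_det _).mp (hB i h1' h2')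
          have hiy : z (i+1) (y i) = U (i+1) *ᵥ c := by
            have hcj := hzc i h1' h2'
            rw [ih h1' h2'' (y i) ⟨hle i h1' h2'', le_rfl⟩] at hcj
            rw [← fact2 c i h1' h2'] at hcj
            have h5 := congrArg (fun w => (B i)⁻¹ *ᵥ w) hcj.symm
            simp only [Matrix.mulVec_mulVec, ← Matrix.mul_assoc] at h5
            rw [Matrix.nonsing_inv_mul _ hdet, Matrix.one_mul, Matrix.one_mulVec] at h5
            exact h5
          have hinit : z (i+1) (y i) = Φ (i+1) (y i) *ᵥ (U (i+1) *ᵥ c) := by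
            have h0 : Φ (i+1) (y i) = 1 := by
              have := hΦinit (i+1) (by omega) h2
              simpa using this
            rw [h0, Matrix.one_mulVec, hiy]
          have hd := hzd (i+1) (by omega) h2
          have hAd := hA (i+1) (by omega) h2
          have hfa := fact1 c (i+1) (by omega) h2
          simp only [Nat.add_sub_cancel] at hd hAd hfa
          exact fun t ht => ode_unique (hy i (by omega)).le hAd hd hfa hinit t ht
    have hc0 : ∀ r : Fin (2*m), (r : ℕ) < m → c r = 0 := hzl
    have hcne : c ≠ 0 := by
      obtain ⟨i, h1, h2, t, ht, hz⟩ := hznt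
      intro h0
      apply hz
      rw [claim i h1 h2 t ht, h0]
      simp
    set u : Fin m → ℝ := fun q => c ⟨m + q, by have := q.isLt; omega⟩ with hu
    have hune : u ≠ 0 := by
      intro h0
      apply hcne
      funext j
      by_cases hj : (j : ℕ) < m
      · exact hc0 j hj
      · have hj2 := j.isLt
        have h6 : c j = u ⟨(j : ℕ) - m, by omega⟩ := by
          rw [hu]
          exact congrArg c (Fin.ext (by simp; omega))
        rw [h6, h0]
        rfl
    have hzn : z n (y n) = (Φ n (y n) * U n) *ᵥ c := by
      rw [claim n hn le_rfl (y n) ⟨hle n hn le_rfl, le_rfl⟩, Matrix.mulVec_mulVec]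
    refine Matrix.exists_mulVec_eq_zero_iff.mp ⟨u, hune, ?_⟩
    funext s
    have key := sum_split (fun j => (Φ n (y n) * U n) ⟨m + s, by have := s.isLt; omega⟩ j * c j)
      (fun j hj => by simp [hc0 j hj])
    have hrow : z n (y n) ⟨m + s, by have := s.isLt; omega⟩ = 0 := hzr _ (by simp)
    rw [hzn] at hrow
    show ∑ q, (Matrix.of fun s q : Fin m =>
        (Φ n (y n) * U n) ⟨m + s, by have := s.isLt; omega⟩
          ⟨m + q, by have := q.isLt; omega⟩) s q * u q = 0
    simp only [Matrix.of_apply]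
    rw [hu, ← key]
    exact hrow
  · intro hdet
    obtain ⟨u, hune, hMu⟩ := Matrix.exists_mulVec_eq_zero_iff.mpr hdet
    set c : Fin (2*m) → ℝ := fun j =>
      if hj : (j : ℕ) < m then 0 else u ⟨(j : ℕ) - m, by have := j.isLt; omega⟩ with hcdef
    have hc0 : ∀ j : Fin (2*m), (j : ℕ) < m → c j = 0 := fun j hj => dif_pos hj
    have hcq : ∀ q : Fin m, c ⟨m + q, by have := q.isLt; omega⟩ = u q := by
      intro q
      simp only [hcdef]
      rw [dif_neg (by simp)]
      exact congrArg u (Fin.ext (by simp))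
    have hz1 : Φ 1 (y 0) *ᵥ (U 1 *ᵥ c) = c := by
      have h0 : Φ 1 (y 0) = 1 := hΦinit 1 le_rfl hn
      rw [h0, hU1, Matrix.one_mulVec, Matrix.one_mulVec]
    refine ⟨fun i t => Φ i t *ᵥ (U i *ᵥ c), fun i h1 h2 t ht => fact1 c i h1 h2 t ht,
      ?_, ?_, ?_, ?_⟩
    · intro i h1 h2
      have h0 : Φ (i+1) (y i) = 1 := by
        have := hΦinit (i+1) (by omega) (by omega)
        simpa using this
      show D i *ᵥ (Φ i (y i) *ᵥ (U i *ᵥ c)) = B i *ᵥ (Φ (i+1) (y i) *ᵥ (U (i+1) *ᵥ c))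
      rw [h0, Matrix.one_mulVec]
      exact (fact2 c i h1 h2).symm
    · intro r hr
      show (Φ 1 (y 0) *ᵥ (U 1 *ᵥ c)) r = 0
      rw [hz1]
      exact hc0 r hr
    · intro s hs
      have hs2 := s.isLt
      have key := sum_split (fun j => (Φ n (y n) * U n) s j * c j)
        (fun j hj => by simp [hc0 j hj])
      have hval : (Φ n (y n) *ᵥ (U n *ᵥ c)) s = ∑ j, (Φ n (y n) * U n) s j * c j := by
        rw [Matrix.mulVec_mulVec]
        rfl
      show (Φ n (y n) *ᵥ (U n *ᵥ c)) s = 0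
      rw [hval, key]
      have h7 : ∀ q : Fin m, (Φ n (y n) * U n) s ⟨m + q, by have := q.isLt; omega⟩
            * c ⟨m + q, by have := q.isLt; omega⟩
          = (Matrix.of fun s q : Fin m => (Φ n (y n) * U n) ⟨m + s, by have := s.isLt; omega⟩
            ⟨m + q, by have := q.isLt; omega⟩) ⟨(s : ℕ) - m, by omega⟩ q * u q := by
        intro q
        rw [hcq q]
        exact congrArg
          (fun r : Fin (2*m) => (Φ n (y n) * U n) r ⟨m + q, by have := q.isLt; omega⟩ * u q)
          (Fin.ext (show (s : ℕ) = m + ((s : ℕ) - m) by omega))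
      rw [Finset.sum_congr rfl (fun q _ => h7 q)]
      exact congrFun hMu ⟨(s : ℕ) - m, by omega⟩
    · refine ⟨1, le_rfl, hn, y 0, ⟨le_rfl, hle 1 le_rfl hn⟩, ?_⟩
      show Φ 1 (y 0) *ᵥ (U 1 *ᵥ c) ≠ 0
      rw [hz1]
      obtain ⟨q, hq⟩ := Function.ne_iff.mp hune
      intro h0
      apply hq
      rw [← hcq q, h0]
      rfl
end
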